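/- For the massive Thirring soliton U_ω with ω ∈ (−1,1), the identity ∫_ℝ ( ω|U_ω|² + (i/2)(conj(U_ω) U_ω' − U_ω conj(U_ω)') ) dx = 2√(1−ω²) holds. -/

import Mathlib

open MeasureTheory

/-- The massive Thirring line soliton profile. -/
noncomputable def thirringSoliton (ω x : ℝ) : ℂ :=
  (↑(Real.sqrt 2 * Real.sqrt (1 - ω ^ 2)) : ℂ) *
    ((↑(Real.sqrt (1 + ω) * Real.cosh (Real.sqrt (1 - ω ^ 2) * x)) : ℂ)
      - Complex.I * (↑(Real.sqrt (1 - ω) * Real.sinh (Real.sqrt (1 - ω ^ 2) * x)) : ℂ)) /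
    (↑(ω + Real.cosh (2 * Real.sqrt (1 - ω ^ 2) * x)) : ℂ)

namespace ThirringAux

noncomputable def mu (ω : ℝ) : ℝ := Real.sqrt (1 - ω ^ 2)

noncomputable def D (ω x : ℝ) : ℝ := ω + Real.cosh (2 * mu ω * x)

noncomputable def cA (ω : ℝ) : ℝ := Real.sqrt 2 * mu ω * Real.sqrt (1 + ω)
noncomputable def cB (ω : ℝ) : ℝ := Real.sqrt 2 * mu ω * Real.sqrt (1 - ω)

noncomputable def p (ω x : ℝ) : ℝ := cA ω * Real.cosh (mu ω * x) / D ω x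
noncomputable def q (ω x : ℝ) : ℝ := -(cB ω * Real.sinh (mu ω * x) / D ω x)

noncomputable def p' (ω x : ℝ) : ℝ :=
  (cA ω * (Real.sinh (mu ω * x) * mu ω) * D ω x
    - cA ω * Real.cosh (mu ω * x) * (Real.sinh (2 * mu ω * x) * (2 * mu ω))) / D ω x ^ 2
noncomputable def q' (ω x : ℝ) : ℝ :=
  -((cB ω * (Real.cosh (mu ω * x) * mu ω) * D ω x
    - cB ω * Real.sinh (mu ω * x) * (Real.sinh (2 * mu ω * x) * (2 * mu ω))) / D ω x ^ 2)

noncomputable def g (ω x : ℝ) : ℝ :=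
  2 * mu ω ^ 2 * (ω * Real.cosh (2 * mu ω * x) + 1) / D ω x ^ 2

noncomputable def F (ω x : ℝ) : ℝ := mu ω * Real.sinh (2 * mu ω * x) / D ω x

variable {ω : ℝ}

lemma one_sub_sq_pos (hω : ω ∈ Set.Ioo (-1 : ℝ) 1) : 0 < 1 - ω ^ 2 := by
  obtain ⟨h1, h2⟩ := hω; nlinarith

lemma mu_pos (hω : ω ∈ Set.Ioo (-1 : ℝ) 1) : 0 < mu ω :=
  Real.sqrt_pos.2 (one_sub_sq_pos hω)

lemma mu_sq (hω : ω ∈ Set.Ioo (-1 : ℝ) 1) : mu ω ^ 2 = 1 - ω ^ 2 :=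
  Real.sq_sqrt (one_sub_sq_pos hω).le

lemma D_pos (hω : ω ∈ Set.Ioo (-1 : ℝ) 1) (x : ℝ) : 0 < D ω x := by
  have := Real.one_le_cosh (2 * mu ω * x)
  have := hω.1
  unfold D; linarith

lemma hasDerivAt_D (x : ℝ) :
    HasDerivAt (fun y => D ω y) (Real.sinh (2 * mu ω * x) * (2 * mu ω)) x := by
  have h : HasDerivAt (fun y : ℝ => 2 * mu ω * y) (2 * mu ω) x := by
    simpa using (hasDerivAt_id x).const_mul (2 * mu ω)
  exact h.cosh.const_add ω

lemma soliton_eq (x : ℝ) :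
    thirringSoliton ω x = (↑(p ω x) : ℂ) + (↑(q ω x) : ℂ) * Complex.I := by
  unfold thirringSoliton p q cA cB D mu
  push_cast
  ring

lemma hasDerivAt_p (hω : ω ∈ Set.Ioo (-1 : ℝ) 1) (x : ℝ) :
    HasDerivAt (p ω) (p' ω x) x := by
  have hN : HasDerivAt (fun y => cA ω * Real.cosh (mu ω * y))
      (cA ω * (Real.sinh (mu ω * x) * mu ω)) x := by
    have h : HasDerivAt (fun y : ℝ => mu ω * y) (mu ω) x := by
      simpa using (hasDerivAt_id x).const_mul (mu ω)
    exact h.cosh.const_mul (cA ω)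
  exact hN.div (hasDerivAt_D x) (D_pos hω x).ne'

lemma hasDerivAt_q (hω : ω ∈ Set.Ioo (-1 : ℝ) 1) (x : ℝ) :
    HasDerivAt (q ω) (q' ω x) x := by
  have hN : HasDerivAt (fun y => cB ω * Real.sinh (mu ω * y))
      (cB ω * (Real.cosh (mu ω * x) * mu ω)) x := by
    have h : HasDerivAt (fun y : ℝ => mu ω * y) (mu ω) x := by
      simpa using (hasDerivAt_id x).const_mul (mu ω)
    exact h.sinh.const_mul (cB ω)
  exact (hN.div (hasDerivAt_D x) (D_pos hω x).ne').neg

lemma hasDerivAt_soliton (hω : ω ∈ Set.Ioo (-1 : ℝ) 1) (x : ℝ) :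
    HasDerivAt (thirringSoliton ω) ((↑(p' ω x) : ℂ) + (↑(q' ω x) : ℂ) * Complex.I) x := by
  have h : HasDerivAt (fun y => (↑(p ω y) : ℂ) + (↑(q ω y) : ℂ) * Complex.I)
      ((↑(p' ω x) : ℂ) + (↑(q' ω x) : ℂ) * Complex.I) x :=
    ((hasDerivAt_p hω x).ofReal_comp).add (((hasDerivAt_q hω x).ofReal_comp).mul_const Complex.I)
  exact h.congr_of_eventuallyEq (Filter.Eventually.of_forall fun y => soliton_eq y)

lemma key_real_identity (hω : ω ∈ Set.Ioo (-1 : ℝ) 1) (x : ℝ) :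
    ω * (p ω x ^ 2 + q ω x ^ 2) - (p ω x * q' ω x - q ω x * p' ω x) = g ω x := by
  have hab : Real.sqrt (1 + ω) * Real.sqrt (1 - ω) = mu ω := by
    rw [← Real.sqrt_mul (by linarith [hω.1] : (0:ℝ) ≤ 1 + ω)]
    unfold mu; ring_nf
  have ha2 : Real.sqrt (1 + ω) ^ 2 = 1 + ω := Real.sq_sqrt (by linarith [hω.1])
  have hb2 : Real.sqrt (1 - ω) ^ 2 = 1 - ω := Real.sq_sqrt (by linarith [hω.2])
  have h2 : Real.sqrt 2 ^ 2 = 2 := Real.sq_sqrt (by norm_num)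
  have hμ2 := mu_sq hω
  have hch2 : Real.cosh (2 * mu ω * x) =
      Real.cosh (mu ω * x) ^ 2 + Real.sinh (mu ω * x) ^ 2 := by
    rw [mul_assoc, Real.cosh_two_mul]
  have hsh2 : Real.sinh (2 * mu ω * x) =
      2 * Real.sinh (mu ω * x) * Real.cosh (mu ω * x) := by
    rw [mul_assoc, Real.sinh_two_mul]
  have hpy : Real.cosh (mu ω * x) ^ 2 - Real.sinh (mu ω * x) ^ 2 = 1 :=
    Real.cosh_sq_sub_sinh_sq (mu ω * x)
  have hDval : D ω x = ω + (Real.cosh (mu ω * x) ^ 2 + Real.sinh (mu ω * x) ^ 2) := by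
    unfold D; rw [hch2]
  have hD : D ω x ≠ 0 := (D_pos hω x).ne'
  have hnum1 : (Real.sqrt 2 * mu ω * Real.sqrt (1 + ω) * Real.cosh (mu ω * x)) ^ 2
      + (Real.sqrt 2 * mu ω * Real.sqrt (1 - ω) * Real.sinh (mu ω * x)) ^ 2
      = 2 * mu ω ^ 2 * D ω x := by
    rw [hDval]
    linear_combination (mu ω ^ 2 * Real.sqrt (1 + ω) ^ 2 * Real.cosh (mu ω * x) ^ 2
        + mu ω ^ 2 * Real.sqrt (1 - ω) ^ 2 * Real.sinh (mu ω * x) ^ 2) * h2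
      + (2 * mu ω ^ 2 * Real.cosh (mu ω * x) ^ 2) * ha2
      + (2 * mu ω ^ 2 * Real.sinh (mu ω * x) ^ 2) * hb2
      + (2 * mu ω ^ 2 * ω) * hpy
  have h1 : p ω x ^ 2 + q ω x ^ 2 = 2 * mu ω ^ 2 / D ω x := by
    unfold p q cA cB
    field_simp
    linear_combination hnum1
  have hnum2 : Real.sqrt 2 * mu ω * Real.sqrt (1 + ω) * Real.cosh (mu ω * x) *
        (Real.sqrt 2 * mu ω * Real.sqrt (1 - ω) * Real.sinh (mu ω * x) *
            (2 * Real.sinh (mu ω * x) * Real.cosh (mu ω * x) * (2 * mu ω)) -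
          Real.sqrt 2 * mu ω * Real.sqrt (1 - ω) * (Real.cosh (mu ω * x) * mu ω) * D ω x) +
      Real.sqrt 2 * mu ω * Real.sqrt (1 - ω) * Real.sinh (mu ω * x) *
        (Real.sqrt 2 * mu ω * Real.sqrt (1 + ω) * (Real.sinh (mu ω * x) * mu ω) * D ω x -
          Real.sqrt 2 * mu ω * Real.sqrt (1 + ω) * Real.cosh (mu ω * x) *
            (2 * Real.sinh (mu ω * x) * Real.cosh (mu ω * x) * (2 * mu ω)))
      = -(2 * mu ω ^ 4) * D ω x := by
    linear_combination (-(mu ω ^ 3 * (Real.sqrt (1 + ω) * Real.sqrt (1 - ω)) *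
          (Real.cosh (mu ω * x) ^ 2 - Real.sinh (mu ω * x) ^ 2) * D ω x)) * h2
      + (-(2 * mu ω ^ 3 * (Real.cosh (mu ω * x) ^ 2 - Real.sinh (mu ω * x) ^ 2) * D ω x)) * hab
      + (-(2 * mu ω ^ 4 * D ω x)) * hpy
  have h2' : p ω x * q' ω x - q ω x * p' ω x = -(2 * mu ω ^ 4) / D ω x ^ 2 := by
    unfold p q p' q' cA cB
    rw [hsh2]
    field_simp
    linear_combination hnum2
  rw [h1, h2']
  have hnum3 : ω * (2 * mu ω ^ 2) * D ω x + 2 * mu ω ^ 4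
      = 2 * mu ω ^ 2 * (ω * (Real.cosh (mu ω * x) ^ 2 + Real.sinh (mu ω * x) ^ 2) + 1) := by
    rw [hDval]
    linear_combination (2 * mu ω ^ 2) * hμ2
  unfold g
  rw [hch2]
  field_simp
  linear_combination (1/2 : ℝ) * hnum3

lemma integrand_eq (hω : ω ∈ Set.Ioo (-1 : ℝ) 1) (x : ℝ) :
    ((ω : ℂ) * (↑(‖thirringSoliton ω x‖) : ℂ) ^ 2
        + Complex.I / 2 * ((starRingEnd ℂ) (thirringSoliton ω x) * deriv (thirringSoliton ω) x
            - thirringSoliton ω x * (starRingEnd ℂ) (deriv (thirringSoliton ω) x)))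
      = (↑(g ω x) : ℂ) := by
  have hd := (hasDerivAt_soliton hω x).deriv
  rw [hd, soliton_eq x]
  rw [← key_real_identity hω x]
  have habs : (↑‖(↑(p ω x) : ℂ) + (↑(q ω x) : ℂ) * Complex.I‖ : ℂ) ^ 2
      = (↑(p ω x ^ 2 + q ω x ^ 2) : ℂ) := by
    rw [← Complex.ofReal_pow, Complex.sq_norm, Complex.normSq_add_mul_I]
  rw [habs]
  simp only [map_add, map_mul, Complex.conj_ofReal, Complex.conj_I]
  push_cast
  linear_combination (↑(p ω x) * ↑(q' ω x) - ↑(q ω x) * ↑(p' ω x) : ℂ) * Complex.I_sq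

lemma hasDerivAt_F (hω : ω ∈ Set.Ioo (-1 : ℝ) 1) (x : ℝ) :
    HasDerivAt (F ω) (g ω x) x := by
  have hN : HasDerivAt (fun y => mu ω * Real.sinh (2 * mu ω * y))
      (mu ω * (Real.cosh (2 * mu ω * x) * (2 * mu ω))) x := by
    have h : HasDerivAt (fun y : ℝ => 2 * mu ω * y) (2 * mu ω) x := by
      simpa using (hasDerivAt_id x).const_mul (2 * mu ω)
    exact h.sinh.const_mul (mu ω)
  have h : HasDerivAt (F ω) _ x :=
    hN.div (hasDerivAt_D x) (D_pos hω x).ne'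
  convert h using 1
  have hD2 := (D_pos hω x).ne'
  have hpy : Real.cosh (2 * mu ω * x) ^ 2 - Real.sinh (2 * mu ω * x) ^ 2 = 1 :=
    Real.cosh_sq_sub_sinh_sq (2 * mu ω * x)
  unfold g D at *
  field_simp
  linear_combination (-(mu ω ^ 2)) * hpy

lemma tendsto_F_atTop (hω : ω ∈ Set.Ioo (-1 : ℝ) 1) :
    Filter.Tendsto (F ω) Filter.atTop (nhds (mu ω)) := by
  have hm := mu_pos hω
  have hlin : Filter.Tendsto (fun x : ℝ => 2 * mu ω * x) Filter.atTop Filter.atTop :=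
    Filter.Tendsto.const_mul_atTop (by linarith) Filter.tendsto_id
  have he : Filter.Tendsto (fun x : ℝ => Real.exp (-(2 * mu ω * x))) Filter.atTop (nhds 0) :=
    Real.tendsto_exp_atBot.comp ((Filter.tendsto_neg_atTop_atBot).comp hlin)
  have key : Filter.Tendsto
      (fun x : ℝ => mu ω * (1 - Real.exp (-(2 * mu ω * x)) ^ 2) /
        (2 * ω * Real.exp (-(2 * mu ω * x)) + 1 + Real.exp (-(2 * mu ω * x)) ^ 2))
      Filter.atTop (nhds (mu ω)) := by
    have hnum : Filter.Tendsto
        (fun x : ℝ => mu ω * (1 - Real.exp (-(2 * mu ω * x)) ^ 2))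
        Filter.atTop (nhds (mu ω * (1 - 0 ^ 2))) :=
      (((he.pow 2).const_sub 1).const_mul (mu ω))
    have hden : Filter.Tendsto
        (fun x : ℝ => 2 * ω * Real.exp (-(2 * mu ω * x)) + 1 + Real.exp (-(2 * mu ω * x)) ^ 2)
        Filter.atTop (nhds (2 * ω * 0 + 1 + 0 ^ 2)) :=
      ((he.const_mul (2 * ω)).add_const 1).add (he.pow 2)
    have h := hnum.div hden (by norm_num)
    simpa [Pi.div_def] using h
  refine key.congr fun x => ?_
  have hD := (D_pos hω x).ne'
  have hprod : Real.exp (2 * mu ω * x) * Real.exp (-(2 * mu ω * x)) = 1 := by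
    rw [← Real.exp_add]; simp
  have hexp := Real.exp_pos (-(2 * mu ω * x))
  have hexp2 := Real.exp_pos (2 * mu ω * x)
  unfold F D at *
  rw [Real.sinh_eq, Real.cosh_eq] at *
  set e := Real.exp (2 * mu ω * x)
  set E := Real.exp (-(2 * mu ω * x))
  have hden1 : 2 * ω * E + 1 + E ^ 2 ≠ 0 := by
    have h : 2 * ω * E + 1 + E ^ 2 = 2 * E * (ω + (e + E) / 2) := by linear_combination -hprod
    rw [h]
    exact mul_ne_zero (by linarith : (0:ℝ) < 2 * E).ne' hD
  rw [div_eq_div_iff hden1 hD]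
  linear_combination (-(mu ω * (ω + E))) * hprod

lemma tendsto_F_atBot (hω : ω ∈ Set.Ioo (-1 : ℝ) 1) :
    Filter.Tendsto (F ω) Filter.atBot (nhds (-mu ω)) := by
  have hm := mu_pos hω
  have hlin : Filter.Tendsto (fun x : ℝ => 2 * mu ω * x) Filter.atBot Filter.atBot :=
    Filter.Tendsto.const_mul_atBot (by linarith) Filter.tendsto_id
  have he : Filter.Tendsto (fun x : ℝ => Real.exp (2 * mu ω * x)) Filter.atBot (nhds 0) :=
    Real.tendsto_exp_atBot.comp hlin
  have key : Filter.Tendsto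
      (fun x : ℝ => mu ω * (Real.exp (2 * mu ω * x) ^ 2 - 1) /
        (2 * ω * Real.exp (2 * mu ω * x) + Real.exp (2 * mu ω * x) ^ 2 + 1))
      Filter.atBot (nhds (-mu ω)) := by
    have hnum : Filter.Tendsto
        (fun x : ℝ => mu ω * (Real.exp (2 * mu ω * x) ^ 2 - 1))
        Filter.atBot (nhds (mu ω * (0 ^ 2 - 1))) :=
      ((he.pow 2).sub_const 1).const_mul (mu ω)
    have hden : Filter.Tendsto
        (fun x : ℝ => 2 * ω * Real.exp (2 * mu ω * x) + Real.exp (2 * mu ω * x) ^ 2 + 1)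
        Filter.atBot (nhds (2 * ω * 0 + 0 ^ 2 + 1)) :=
      ((he.const_mul (2 * ω)).add (he.pow 2)).add_const 1
    have h := hnum.div hden (by norm_num)
    simpa [Pi.div_def] using h
  refine key.congr fun x => ?_
  have hD := (D_pos hω x).ne'
  have hprod : Real.exp (2 * mu ω * x) * Real.exp (-(2 * mu ω * x)) = 1 := by
    rw [← Real.exp_add]; simp
  have hexp := Real.exp_pos (-(2 * mu ω * x))
  have hexp2 := Real.exp_pos (2 * mu ω * x)
  unfold F D at *
  rw [Real.sinh_eq, Real.cosh_eq] at *
  set e := Real.exp (2 * mu ω * x)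
  set E := Real.exp (-(2 * mu ω * x))
  have hden1 : 2 * ω * e + e ^ 2 + 1 ≠ 0 := by
    have h : 2 * ω * e + e ^ 2 + 1 = 2 * e * (ω + (e + E) / 2) := by linear_combination -hprod
    rw [h]
    exact mul_ne_zero (by linarith : (0:ℝ) < 2 * e).ne' hD
  rw [div_eq_div_iff hden1 hD]
  linear_combination (mu ω * (ω + e)) * hprod

lemma integrable_g (hω : ω ∈ Set.Ioo (-1 : ℝ) 1) : Integrable (g ω) := by
  have hm := mu_pos hω
  have hω1 : |ω| < 1 := abs_lt.2 ⟨hω.1, hω.2⟩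
  have habs : (0:ℝ) < 1 - |ω| := by linarith
  set c : ℝ := 2 * mu ω with hc
  have hcpos : 0 < c := by rw [hc]; linarith
  set C : ℝ := 8 * mu ω ^ 2 / (1 - |ω|) ^ 2 with hC
  have hIci : IntegrableOn (fun x : ℝ => Real.exp (-c * |x|)) (Set.Ici 0) := by
    rw [integrableOn_Ici_iff_integrableOn_Ioi]
    exact (exp_neg_integrableOn_Ioi 0 hcpos).congr_fun
      (fun x hx => by rw [abs_of_pos hx]) measurableSet_Ioi
  have h_map_neg : ((volume : Measure ℝ).restrict (Set.Ici 0)).map Neg.neg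
      = (volume : Measure ℝ).restrict (Set.Iic 0) := by
    conv => rhs; rw [← Measure.map_neg_eq_self (volume : Measure ℝ),
      MeasurableEmbedding.restrict_map measurableEmbedding_neg]
    simp
  have hIic : IntegrableOn (fun x : ℝ => Real.exp (-c * |x|)) (Set.Iic 0) := by
    rw [IntegrableOn, ← h_map_neg, measurableEmbedding_neg.integrable_map_iff]
    refine hIci.congr_fun (fun x _ => ?_) measurableSet_Ici
    simp [Function.comp, abs_neg]
  have hdom : Integrable (fun x : ℝ => C * Real.exp (-c * |x|)) := by
    refine Integrable.const_mul ?_ C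
    rw [← integrableOn_univ, ← Set.Iic_union_Ici (a := (0:ℝ)), integrableOn_union]
    exact ⟨hIic, hIci⟩
  refine hdom.mono' ?_ (Filter.Eventually.of_forall fun x => ?_)
  · apply Continuous.aestronglyMeasurable
    apply Continuous.div
    · fun_prop
    · unfold D; fun_prop
    · exact fun x => pow_ne_zero 2 (D_pos hω x).ne'
  · have hch1 : (1:ℝ) ≤ Real.cosh (2 * mu ω * x) := Real.one_le_cosh _
    have hchpos : (0:ℝ) < Real.cosh (2 * mu ω * x) := lt_of_lt_of_le one_pos hch1
    have hDge : (1 - |ω|) * Real.cosh (2 * mu ω * x) ≤ D ω x := by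
      unfold D
      nlinarith [neg_abs_le ω, abs_nonneg ω]
    have hDpos := D_pos hω x
    have hexpch : Real.exp (c * |x|) ≤ 2 * Real.cosh (2 * mu ω * x) := by
      have h1 : c * |x| = |2 * mu ω * x| := by
        rw [abs_mul, abs_of_pos (by linarith : (0:ℝ) < 2 * mu ω)]
      rw [h1, Real.cosh_eq]
      have := Real.exp_abs_le (2 * mu ω * x)
      linarith
    have hnum : |ω * Real.cosh (2 * mu ω * x) + 1| ≤ 2 * Real.cosh (2 * mu ω * x) := by
      rw [abs_le]
      constructor
      · nlinarith [neg_abs_le ω, abs_nonneg ω]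
      · nlinarith [le_abs_self ω, abs_nonneg ω]
    have hgabs : ‖g ω x‖ ≤ 4 * mu ω ^ 2 / ((1 - |ω|) ^ 2 * Real.cosh (2 * mu ω * x)) := by
      unfold g
      rw [Real.norm_eq_abs, abs_div, abs_of_pos (by positivity : (0:ℝ) < D ω x ^ 2)]
      rw [abs_mul, abs_of_nonneg (by positivity : (0:ℝ) ≤ 2 * mu ω ^ 2)]
      rw [div_le_div_iff₀ (by positivity) (by positivity)]
      have hDsq : ((1 - |ω|) * Real.cosh (2 * mu ω * x)) ^ 2 ≤ D ω x ^ 2 := by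
        apply pow_le_pow_left₀ (by positivity) hDge
      nlinarith [mul_le_mul_of_nonneg_left hnum
          (by positivity : (0:ℝ) ≤ 2 * mu ω ^ 2 * ((1 - |ω|) ^ 2 * Real.cosh (2 * mu ω * x))),
        mul_le_mul_of_nonneg_left hDsq (by positivity : (0:ℝ) ≤ 4 * mu ω ^ 2)]
    refine hgabs.trans ?_
    have h3 : 1 / (2 * Real.cosh (2 * mu ω * x)) ≤ Real.exp (-c * |x|) := by
      rw [neg_mul, Real.exp_neg, ← one_div]
      exact one_div_le_one_div_of_le (Real.exp_pos _) hexpch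
    calc 4 * mu ω ^ 2 / ((1 - |ω|) ^ 2 * Real.cosh (2 * mu ω * x))
        = C * (1 / (2 * Real.cosh (2 * mu ω * x))) := by
          rw [hC]; field_simp; ring
      _ ≤ C * Real.exp (-c * |x|) := by
          apply mul_le_mul_of_nonneg_left h3 (by positivity)

end ThirringAux

/-- ∫ ( ω|U_ω|² + (i/2)(conj(U_ω)U_ω' − U_ω conj(U_ω)') ) dx = 2√(1−ω²). -/
theorem thirringSoliton_momentum_integral (ω : ℝ) (hω : ω ∈ Set.Ioo (-1 : ℝ) 1) :
    ∫ x : ℝ, ((ω : ℂ) * (↑(‖thirringSoliton ω x‖) : ℂ) ^ 2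
        + Complex.I / 2 * ((starRingEnd ℂ) (thirringSoliton ω x) * deriv (thirringSoliton ω) x
            - thirringSoliton ω x * (starRingEnd ℂ) (deriv (thirringSoliton ω) x)))
      = (↑(2 * Real.sqrt (1 - ω ^ 2)) : ℂ) := by
  have h1 : ∫ x : ℝ, ((ω : ℂ) * (↑(‖thirringSoliton ω x‖) : ℂ) ^ 2
        + Complex.I / 2 * ((starRingEnd ℂ) (thirringSoliton ω x) * deriv (thirringSoliton ω) x
            - thirringSoliton ω x * (starRingEnd ℂ) (deriv (thirringSoliton ω) x)))
      = ∫ x : ℝ, (↑(ThirringAux.g ω x) : ℂ) :=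
    integral_congr_ae (Filter.Eventually.of_forall fun x => ThirringAux.integrand_eq hω x)
  rw [h1,
    show (∫ x : ℝ, (↑(ThirringAux.g ω x) : ℂ)) = ((↑(∫ x : ℝ, ThirringAux.g ω x) : ℂ)) from
      integral_ofReal]
  have h2 : ∫ x : ℝ, ThirringAux.g ω x
      = ThirringAux.mu ω - (-ThirringAux.mu ω) :=
    MeasureTheory.integral_of_hasDerivAt_of_tendsto
      (ThirringAux.hasDerivAt_F hω) (ThirringAux.integrable_g hω)
      (ThirringAux.tendsto_F_atBot hω) (ThirringAux.tendsto_F_atTop hω)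
  rw [h2]
  unfold ThirringAux.mu
  push_cast
  ring
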